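/- Let K and L₀(t,x) = λ² G_κ(t,x)² be as above. Then the space-time convolution identity (K ⋆ L₀)(t,x) = K(t,x) − L₀(t,x) holds for all t > 0 and x ∈ ℝ, where (f ⋆ g)(t,x) = ∫₀ᵗ∫_ℝ f(t−s, x−y) g(s,y) dy ds. -/

import Mathlib

open Real MeasureTheory

/-- Wave kernel `G_κ(t,x) = (1/2)·1_{|x| ≤ κt}` for `t ≥ 0`, and `0` for `t < 0`. -/
noncomputable def waveKernel (κ t x : ℝ) : ℝ :=
  if 0 ≤ t ∧ |x| ≤ κ * t then 1 / 2 else 0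

/-- `T_κ(t,x) = (t − |x|/(2κ))·1_{|x| ≤ 2κt}`. -/
noncomputable def Tker (κ t x : ℝ) : ℝ :=
  if |x| ≤ 2 * κ * t then t - |x| / (2 * κ) else 0

/-- Modified Bessel function of the first kind of order zero:
`I₀(z) = Σ_{k≥0} (z²/4)ᵏ/(k!)²`. -/
noncomputable def besselI0 (z : ℝ) : ℝ :=
  ∑' k : ℕ, (z ^ 2 / 4) ^ k / (k.factorial : ℝ) ^ 2

/-- `K(t,x) = (λ²/4) I₀(√(λ²((κt)² − x²)/(2κ)))` on `|x| ≤ κt`, zero otherwise. -/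
noncomputable def Kker (κ lam t x : ℝ) : ℝ :=
  if |x| ≤ κ * t then
    lam ^ 2 / 4 * besselI0 (Real.sqrt (lam ^ 2 * ((κ * t) ^ 2 - x ^ 2) / (2 * κ)))
  else 0

/-! ### Auxiliary definitions -/

/-- The `k`-th term region/integrand in light-cone coordinates `(s, y)`. -/
noncomputable def gfun (κ t x : ℝ) (k : ℕ) (p : ℝ × ℝ) : ℝ :=
  Set.indicator {q : ℝ × ℝ | |q.2| ≤ κ * q.1 ∧ |x - q.2| ≤ κ * (t - q.1)}
    (fun q => ((κ * (t - q.1)) ^ 2 - (x - q.2) ^ 2) ^ k) p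

/-- The same after the shear `u = y + κ s`. -/
noncomputable def hfun (κ t x : ℝ) (k : ℕ) (p : ℝ × ℝ) : ℝ :=
  Set.indicator {q : ℝ × ℝ | 0 ≤ q.2 ∧ q.2 ≤ 2 * κ * q.1 ∧ q.2 ≤ κ * t + x ∧
      2 * κ * q.1 - q.2 ≤ κ * t - x}
    (fun q => (κ * t + x - q.2) ^ k * (κ * t - x + q.2 - 2 * κ * q.1) ^ k) p

lemma summable_aux (C : ℝ) (hC : 0 ≤ C) :
    Summable (fun k : ℕ => C ^ k / (k.factorial : ℝ) ^ 2) := by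
  refine Summable.of_nonneg_of_le (fun k => by positivity) (fun k => ?_)
    (Real.summable_pow_div_factorial C)
  have h1 : (1 : ℝ) ≤ (k.factorial : ℝ) := by exact_mod_cast k.factorial_pos
  have h2 : (k.factorial : ℝ) ≤ ((k.factorial : ℝ)) ^ 2 := by nlinarith
  exact div_le_div_of_nonneg_left (by positivity) (by positivity) h2 |>.trans_eq (by norm_num)

lemma integral_pow_linear (c d a b : ℝ) (hd : 0 < d) (k : ℕ) :
    ∫ s in a..b, (c - d * s) ^ k =
      ((c - d * a) ^ (k + 1) - (c - d * b) ^ (k + 1)) / (d * (k + 1)) := by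
  have key : ∀ s : ℝ, HasDerivAt (fun s : ℝ => -(c - d * s) ^ (k + 1) / (d * (k + 1)))
      ((c - d * s) ^ k) s := by
    intro s
    have h1 : HasDerivAt (fun s : ℝ => c - d * s) (-d) s := by
      simpa using ((hasDerivAt_id s).const_mul d).const_sub c
    have h2 := (h1.pow (k + 1)).neg.div_const (d * (k + 1))
    refine h2.congr_deriv ?_
    have hk : ((k : ℝ) + 1) ≠ 0 := by positivity
    field_simp
    rw [Nat.add_sub_cancel]
    push_cast
    ring
  rw [intervalIntegral.integral_eq_sub_of_hasDerivAt (fun s _ => key s)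
    (Continuous.intervalIntegrable (by fun_prop) a b)]
  ring

lemma indicator_int_aux {S : Set ℝ} (hS : MeasurableSet S) {φ : ℝ → ℝ} (hφ : Measurable φ)
    {R M : ℝ} (hR : 0 ≤ R) (hM : 0 ≤ M) (hsub : ∀ y ∈ S, |y| ≤ R) (hbd : ∀ y ∈ S, |φ y| ≤ M) :
    Integrable (S.indicator φ) ∧ ∫ y, ‖S.indicator φ y‖ ≤ M * (2 * R) := by
  have hmaj : Integrable ((Set.Icc (-R) R).indicator (fun _ => M)) := by
    rw [integrable_indicator_iff measurableSet_Icc]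
    exact integrableOn_const measure_Icc_lt_top.ne
  have hpt : ∀ y, ‖S.indicator φ y‖ ≤ (Set.Icc (-R) R).indicator (fun _ => M) y := by
    intro y
    by_cases hy : y ∈ S
    · rw [Set.indicator_of_mem hy, Set.indicator_of_mem (Set.mem_Icc.mpr (abs_le.mp (hsub y hy)))]
      exact hbd y hy
    · rw [Set.indicator_of_notMem hy]
      simpa using Set.indicator_nonneg (fun _ _ => hM) y
  have hint : Integrable (S.indicator φ) :=
    Integrable.mono' hmaj (hφ.indicator hS).aestronglyMeasurable (ae_of_all _ hpt)
  refine ⟨hint, ?_⟩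
  calc ∫ y, ‖S.indicator φ y‖ ≤ ∫ y, (Set.Icc (-R) R).indicator (fun _ => M) y :=
        integral_mono hint.norm hmaj hpt
    _ = M * (2 * R) := by
        rw [integral_indicator_const _ measurableSet_Icc, measureReal_def, Real.volume_Icc, smul_eq_mul,
          ENNReal.toReal_ofReal (by linarith)]
        ring


lemma lemB (κ t x : ℝ) (hκ : 0 < κ) (ht : 0 < t) (hξ : 0 ≤ κ * t + x) (hη : 0 ≤ κ * t - x)
    (k : ℕ) :
    ∫ s in Set.Ioc (0:ℝ) t, ∫ y : ℝ, gfun κ t x k (s, y) =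
      (κ * t + x) ^ (k + 1) * (κ * t - x) ^ (k + 1) / (2 * κ * ((k : ℝ) + 1) ^ 2) := by
  have hk1 : ((k : ℝ) + 1) ≠ 0 := by positivity
  -- Step 1 : shear change of variables in `y`.
  have step1 : ∀ s : ℝ, (∫ y : ℝ, gfun κ t x k (s, y)) = ∫ u : ℝ, hfun κ t x k (s, u) := by
    intro s
    rw [← MeasureTheory.integral_sub_right_eq_self (fun y => gfun κ t x k (s, y)) (κ * s)]
    congr 1 with u
    unfold gfun hfun
    rw [Set.indicator_apply, Set.indicator_apply]
    refine if_congr ?_ ?_ rfl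
    · simp only [Set.mem_setOf_eq]
      rw [abs_le, abs_le]
      constructor
      · rintro ⟨⟨h1, h2⟩, h3, h4⟩
        exact ⟨by linarith, by linarith, by linarith, by linarith⟩
      · rintro ⟨h1, h2, h3, h4⟩
        exact ⟨⟨by linarith, by linarith⟩, by linarith, by linarith⟩
    · rw [← mul_pow]; congr 1; ring
  simp only [step1]
  -- Step 2 : Fubini.
  have hSmeas : MeasurableSet {q : ℝ × ℝ | 0 ≤ q.2 ∧ q.2 ≤ 2 * κ * q.1 ∧ q.2 ≤ κ * t + x ∧
      2 * κ * q.1 - q.2 ≤ κ * t - x} := by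
    simp only [Set.setOf_and]
    exact ((measurableSet_le measurable_const measurable_snd).inter
      ((measurableSet_le measurable_snd (measurable_fst.const_mul (2 * κ))).inter
      ((measurableSet_le measurable_snd measurable_const).inter
      (measurableSet_le ((measurable_fst.const_mul (2 * κ)).sub measurable_snd)
        measurable_const))))
  have hmeasH : Measurable (hfun κ t x k) := by
    unfold hfun
    exact Measurable.indicator (by fun_prop) hSmeas
  have hbound : ∀ p : ℝ × ℝ, ‖hfun κ t x k p‖ ≤
      Set.indicator ((Set.univ : Set ℝ) ×ˢ Set.Icc 0 (κ * t + x))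
        (fun _ => (κ * t + x) ^ k * (κ * t - x) ^ k) p := by
    intro p
    unfold hfun
    by_cases hp : p ∈ {q : ℝ × ℝ | 0 ≤ q.2 ∧ q.2 ≤ 2 * κ * q.1 ∧ q.2 ≤ κ * t + x ∧
        2 * κ * q.1 - q.2 ≤ κ * t - x}
    · obtain ⟨h1, h2, h3, h4⟩ := Set.mem_setOf_eq ▸ hp
      rw [Set.indicator_of_mem hp, Set.indicator_of_mem (by exact ⟨Set.mem_univ _, h1, h3⟩)]
      have hb1 : (0:ℝ) ≤ κ * t + x - p.2 := by linarith
      have hb2 : (0:ℝ) ≤ κ * t - x + p.2 - 2 * κ * p.1 := by linarith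
      rw [Real.norm_eq_abs, abs_of_nonneg (mul_nonneg (pow_nonneg hb1 k) (pow_nonneg hb2 k))]
      exact mul_le_mul (pow_le_pow_left₀ hb1 (by linarith) k)
        (pow_le_pow_left₀ hb2 (by linarith) k) (pow_nonneg hb2 k) (pow_nonneg hξ k)
    · rw [Set.indicator_of_notMem hp]
      simpa using Set.indicator_nonneg
        (fun _ _ => mul_nonneg (pow_nonneg hξ k) (pow_nonneg hη k)) p
  have hmajInt : Integrable
      (Set.indicator ((Set.univ : Set ℝ) ×ˢ Set.Icc 0 (κ * t + x))
        (fun _ => (κ * t + x) ^ k * (κ * t - x) ^ k))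
      ((volume.restrict (Set.Ioc 0 t)).prod volume) := by
    rw [integrable_indicator_iff (MeasurableSet.univ.prod measurableSet_Icc)]
    refine integrableOn_const (LT.lt.ne ?_)
    rw [Measure.prod_prod]
    refine ENNReal.mul_lt_top ?_ measure_Icc_lt_top
    rw [Measure.restrict_apply MeasurableSet.univ, Set.univ_inter]
    exact measure_Ioc_lt_top
  have hintH : Integrable (Function.uncurry (fun s u => hfun κ t x k (s, u)))
      ((volume.restrict (Set.Ioc 0 t)).prod volume) := by
    refine Integrable.mono' hmajInt ?_ (ae_of_all _ hbound)
    exact hmeasH.aestronglyMeasurable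
  rw [MeasureTheory.integral_integral_swap hintH]
  -- Step 3 : the inner `s`-integral.
  have step3 : ∀ u : ℝ, (∫ s in Set.Ioc (0:ℝ) t, hfun κ t x k (s, u)) =
      Set.indicator (Set.Icc 0 (κ * t + x))
        (fun u => (κ * t + x - u) ^ k * ((κ * t - x) ^ (k + 1) / (2 * κ * ((k : ℝ) + 1)))) u := by
    intro u
    by_cases hu : u ∈ Set.Icc (0:ℝ) (κ * t + x)
    · obtain ⟨hu0, huξ⟩ := hu
      rw [Set.indicator_of_mem (Set.mem_Icc.mpr ⟨hu0, huξ⟩)]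
      have h2κ : (0:ℝ) < 2 * κ := by linarith
      have hab : u / (2 * κ) ≤ (u + (κ * t - x)) / (2 * κ) :=
        (div_le_div_iff_of_pos_right h2κ).mpr (by linarith)
      have ha0 : 0 ≤ u / (2 * κ) := by positivity
      have hbt : (u + (κ * t - x)) / (2 * κ) ≤ t := by
        rw [div_le_iff₀ h2κ]; linarith
      have hfs : ∀ s : ℝ, hfun κ t x k (s, u) =
          Set.indicator (Set.Icc (u / (2 * κ)) ((u + (κ * t - x)) / (2 * κ)))
            (fun s => (κ * t + x - u) ^ k * (κ * t - x + u - 2 * κ * s) ^ k) s := by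
        intro s
        unfold hfun
        rw [Set.indicator_apply, Set.indicator_apply]
        refine if_congr ?_ rfl rfl
        simp only [Set.mem_setOf_eq, Set.mem_Icc]
        constructor
        · rintro ⟨_, h2, _, h4⟩
          constructor
          · rw [div_le_iff₀ h2κ]; linarith
          · rw [le_div_iff₀ h2κ]; linarith
        · rintro ⟨hs1, hs2⟩
          rw [div_le_iff₀ h2κ] at hs1
          rw [le_div_iff₀ h2κ] at hs2
          exact ⟨hu0, by linarith, huξ, by linarith⟩
      have hae : (Set.Icc (u / (2 * κ)) ((u + (κ * t - x)) / (2 * κ)) ∩ Set.Ioc 0 t : Set ℝ)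
          =ᵐ[volume] Set.Ioc (u / (2 * κ)) ((u + (κ * t - x)) / (2 * κ)) := by
        rw [MeasureTheory.ae_eq_set]
        constructor
        · refine measure_mono_null ?_ (measure_singleton (u / (2 * κ)))
          rintro s ⟨⟨⟨hs1, hs2⟩, _, _⟩, hs5⟩
          simp only [Set.mem_Ioc, not_and_or, not_lt, not_le] at hs5
          rcases hs5 with hs5 | hs5
          · exact le_antisymm hs5 hs1
          · exact absurd hs2 (not_le.2 hs5)
        · refine measure_mono_null ?_ (measure_empty (μ := volume))
          rintro s ⟨⟨hs1, hs2⟩, hs3⟩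
          exact absurd ⟨⟨hs1.le, hs2⟩, ⟨lt_of_le_of_lt ha0 hs1, hs2.trans hbt⟩⟩ hs3
      simp only [hfs]
      rw [integral_indicator measurableSet_Icc, Measure.restrict_restrict measurableSet_Icc,
        Measure.restrict_congr_set hae, ← intervalIntegral.integral_of_le hab,
        intervalIntegral.integral_const_mul]
      have hin := integral_pow_linear (κ * t - x + u) (2 * κ) (u / (2 * κ))
        ((u + (κ * t - x)) / (2 * κ)) h2κ k
      have e1 : κ * t - x + u - 2 * κ * (u / (2 * κ)) = κ * t - x := by
        field_simp
        ring
      have e2 : κ * t - x + u - 2 * κ * ((u + (κ * t - x)) / (2 * κ)) = 0 := by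
        field_simp
        ring
      rw [e1, e2] at hin
      rw [hin, zero_pow (Nat.succ_ne_zero k), sub_zero]
    · rw [Set.indicator_of_notMem hu]
      have hz : ∀ s : ℝ, hfun κ t x k (s, u) = 0 := by
        intro s
        unfold hfun
        apply Set.indicator_of_notMem
        simp only [Set.mem_Icc, not_and_or, not_le] at hu
        intro hmem
        rcases hu with hu | hu
        · exact absurd hmem.1 (not_le.2 hu)
        · exact absurd hmem.2.2.1 (not_le.2 hu)
      simp only [hz, integral_zero]
  simp only [step3]
  -- Step 4 : the outer `u`-integral.
  rw [integral_indicator measurableSet_Icc, integral_Icc_eq_integral_Ioc,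
    ← intervalIntegral.integral_of_le hξ]
  rw [intervalIntegral.integral_mul_const]
  have hout := integral_pow_linear (κ * t + x) 1 0 (κ * t + x) one_pos k
  simp only [one_mul, mul_zero, sub_zero, sub_self] at hout
  rw [hout, zero_pow (Nat.succ_ne_zero k), sub_zero, div_mul_div_comm]
  congr 1
  ring

theorem Kker_conv_L0 (κ lam t x : ℝ) (hκ : 0 < κ) (ht : 0 < t) :
    ∫ s in (0:ℝ)..t, ∫ y : ℝ,
        Kker κ lam (t - s) (x - y) * (lam ^ 2 * (waveKernel κ s y) ^ 2)
      = Kker κ lam t x - lam ^ 2 * (waveKernel κ t x) ^ 2 := by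
  rw [intervalIntegral.integral_of_le ht.le]
  rcases le_or_gt |x| (κ * t) with hx | hx
  · -- main case : |x| ≤ κ t
    have hxy := abs_le.mp hx
    have hξ : 0 ≤ κ * t + x := by linarith [hxy.1]
    have hη : 0 ≤ κ * t - x := by linarith [hxy.2]
    have hκ' : κ ≠ 0 := ne_of_gt hκ
    set C : ℝ := lam ^ 2 * (κ * t) ^ 2 / (8 * κ) with hCdef
    have hC : 0 ≤ C := by rw [hCdef]; positivity
    set A : ℕ → ℝ := fun k => lam ^ 4 / 16 * (lam ^ 2 / (8 * κ)) ^ k / (k.factorial : ℝ) ^ 2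
      with hA
    have hAk : ∀ k : ℕ, 0 ≤ A k := by intro k; rw [hA]; positivity
    -- sections of gfun as indicator functions on ℝ
    have gsec : ∀ (k : ℕ) (s y : ℝ), gfun κ t x k (s, y) =
        Set.indicator {y : ℝ | |y| ≤ κ * s ∧ |x - y| ≤ κ * (t - s)}
          (fun y => ((κ * (t - s)) ^ 2 - (x - y) ^ 2) ^ k) y := by
      intro k s y
      unfold gfun
      by_cases h : y ∈ {y : ℝ | |y| ≤ κ * s ∧ |x - y| ≤ κ * (t - s)}
      · rw [Set.indicator_of_mem h]
        exact Set.indicator_of_mem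
          (show (s, y) ∈ {q : ℝ × ℝ | |q.2| ≤ κ * q.1 ∧ |x - q.2| ≤ κ * (t - q.1)} from h) _
      · rw [Set.indicator_of_notMem h]
        exact Set.indicator_of_notMem
          (show (s, y) ∉ {q : ℝ × ℝ | |q.2| ≤ κ * q.1 ∧ |x - q.2| ≤ κ * (t - q.1)} from h) _
    have hSmeas : ∀ s : ℝ, MeasurableSet {y : ℝ | |y| ≤ κ * s ∧ |x - y| ≤ κ * (t - s)} := by
      intro s
      simp only [Set.setOf_and]
      exact (measurableSet_le (by fun_prop) measurable_const).inter
        (measurableSet_le (by fun_prop) measurable_const)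
    -- integrability and L¹-bound of the sections
    have key : ∀ (k : ℕ), ∀ s ∈ Set.Ioc (0:ℝ) t,
        Integrable (fun y => gfun κ t x k (s, y)) ∧
          ∫ y : ℝ, ‖gfun κ t x k (s, y)‖ ≤ ((κ * t) ^ 2) ^ k * (2 * (κ * t)) := by
      intro k s hs
      have hsub : ∀ y ∈ {y : ℝ | |y| ≤ κ * s ∧ |x - y| ≤ κ * (t - s)}, |y| ≤ κ * t := by
        rintro y ⟨hy1, _⟩
        exact hy1.trans (by nlinarith [hs.2])
      have hbd : ∀ y ∈ {y : ℝ | |y| ≤ κ * s ∧ |x - y| ≤ κ * (t - s)},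
          |((κ * (t - s)) ^ 2 - (x - y) ^ 2) ^ k| ≤ ((κ * t) ^ 2) ^ k := by
        rintro y ⟨hy1, hy2⟩
        have h0 : 0 ≤ κ * (t - s) := le_trans (abs_nonneg _) hy2
        have hw : 0 ≤ (κ * (t - s)) ^ 2 - (x - y) ^ 2 := by
          nlinarith [sq_abs (x - y), abs_nonneg (x - y)]
        have hup : (κ * (t - s)) ^ 2 - (x - y) ^ 2 ≤ (κ * t) ^ 2 := by
          have hle : κ * (t - s) ≤ κ * t := by nlinarith [mul_pos hκ hs.1]
          have := pow_le_pow_left₀ h0 hle 2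
          linarith [sq_nonneg (x - y)]
        rw [abs_of_nonneg (pow_nonneg hw k)]
        exact pow_le_pow_left₀ hw hup k
      have h1 := indicator_int_aux (hSmeas s)
        (φ := fun y => ((κ * (t - s)) ^ 2 - (x - y) ^ 2) ^ k) (by fun_prop)
        (R := κ * t) (M := ((κ * t) ^ 2) ^ k) (by positivity) (by positivity) hsub hbd
      constructor
      · exact h1.1.congr (ae_of_all _ fun y => (gsec k s y).symm)
      · calc ∫ y : ℝ, ‖gfun κ t x k (s, y)‖
            = ∫ y : ℝ, ‖Set.indicator {y : ℝ | |y| ≤ κ * s ∧ |x - y| ≤ κ * (t - s)}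
              (fun y => ((κ * (t - s)) ^ 2 - (x - y) ^ 2) ^ k) y‖ := by
              simp only [gsec k s]
          _ ≤ ((κ * t) ^ 2) ^ k * (2 * (κ * t)) := h1.2
    -- pointwise series expansion of the integrand
    have claim1 : ∀ s ∈ Set.Ioc (0:ℝ) t, ∀ y : ℝ,
        Kker κ lam (t - s) (x - y) * (lam ^ 2 * waveKernel κ s y ^ 2)
          = ∑' k : ℕ, A k * gfun κ t x k (s, y) := by
      intro s hs y
      by_cases h1 : |x - y| ≤ κ * (t - s)
      · by_cases h2 : |y| ≤ κ * s
        · have hmem : (s, y) ∈ {q : ℝ × ℝ | |q.2| ≤ κ * q.1 ∧ |x - q.2| ≤ κ * (t - q.1)} :=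
            ⟨h2, h1⟩
          have hw : 0 ≤ (κ * (t - s)) ^ 2 - (x - y) ^ 2 := by
            nlinarith [sq_abs (x - y), abs_nonneg (x - y), le_trans (abs_nonneg (x - y)) h1]
          have hv : 0 ≤ lam ^ 2 * ((κ * (t - s)) ^ 2 - (x - y) ^ 2) / (2 * κ) := by positivity
          unfold Kker waveKernel gfun
          rw [if_pos h1, if_pos ⟨hs.1.le, h2⟩]
          simp only [Set.indicator_of_mem hmem]
          rw [besselI0, Real.sq_sqrt hv]
          have hterm : ∀ k : ℕ, A k * ((κ * (t - s)) ^ 2 - (x - y) ^ 2) ^ k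
              = lam ^ 4 / 16 * ((lam ^ 2 * ((κ * (t - s)) ^ 2 - (x - y) ^ 2) / (2 * κ) / 4) ^ k
                / (k.factorial : ℝ) ^ 2) := by
            intro k
            rw [hA]
            have hbase : lam ^ 2 * ((κ * (t - s)) ^ 2 - (x - y) ^ 2) / (2 * κ) / 4
                = lam ^ 2 / (8 * κ) * ((κ * (t - s)) ^ 2 - (x - y) ^ 2) := by
              ring
            rw [hbase, mul_pow (lam ^ 2 / (8 * κ)) ((κ * (t - s)) ^ 2 - (x - y) ^ 2) k]
            ring
          rw [tsum_congr hterm, tsum_mul_left]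
          ring
        · unfold waveKernel gfun
          rw [if_neg (fun hc => h2 hc.2)]
          have hnm : (s, y) ∉ {q : ℝ × ℝ | |q.2| ≤ κ * q.1 ∧ |x - q.2| ≤ κ * (t - q.1)} :=
            fun hc => h2 hc.1
          simp only [Set.indicator_of_notMem hnm]
          simp
      · unfold Kker gfun
        rw [if_neg h1]
        have hnm : (s, y) ∉ {q : ℝ × ℝ | |q.2| ≤ κ * q.1 ∧ |x - q.2| ≤ κ * (t - q.1)} :=
          fun hc => h1 hc.2
        simp only [Set.indicator_of_notMem hnm]
        simp
    -- swap the sum and the inner integral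
    have claim2 : ∀ s ∈ Set.Ioc (0:ℝ) t,
        (∫ y : ℝ, ∑' k : ℕ, A k * gfun κ t x k (s, y))
          = ∑' k : ℕ, A k * ∫ y : ℝ, gfun κ t x k (s, y) := by
      intro s hs
      have hint : ∀ k : ℕ, Integrable (fun y => A k * gfun κ t x k (s, y)) :=
        fun k => ((key k s hs).1).const_mul (A k)
      have hsum : Summable fun k : ℕ => ∫ y : ℝ, ‖A k * gfun κ t x k (s, y)‖ := by
        refine Summable.of_nonneg_of_le
          (fun k => integral_nonneg (fun y => norm_nonneg _)) (fun k => ?_)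
          (((summable_aux C hC).mul_left (lam ^ 4 / 16)).mul_right (2 * (κ * t)))
        have e : ∫ y : ℝ, ‖A k * gfun κ t x k (s, y)‖
            = A k * ∫ y : ℝ, ‖gfun κ t x k (s, y)‖ := by
          simp only [norm_mul, Real.norm_eq_abs, abs_of_nonneg (hAk k)]
          exact integral_const_mul (A k) _
        rw [e]
        calc A k * ∫ y : ℝ, ‖gfun κ t x k (s, y)‖
            ≤ A k * (((κ * t) ^ 2) ^ k * (2 * (κ * t))) :=
              mul_le_mul_of_nonneg_left (key k s hs).2 (hAk k)
          _ = lam ^ 4 / 16 * (C ^ k / (k.factorial : ℝ) ^ 2) * (2 * (κ * t)) := by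
              rw [hA, hCdef]
              rw [show lam ^ 2 * (κ * t) ^ 2 / (8 * κ) = lam ^ 2 / (8 * κ) * (κ * t) ^ 2 by ring,
                mul_pow (lam ^ 2 / (8 * κ)) ((κ * t) ^ 2) k]
              ring
      rw [← integral_tsum_of_summable_integral_norm hint hsum]
      exact tsum_congr fun k => integral_const_mul (A k) _
    -- strong measurability of the inner integrals
    have hGmeas : ∀ k : ℕ, StronglyMeasurable (gfun κ t x k) := by
      intro k
      unfold gfun
      refine (Measurable.indicator (by fun_prop) ?_).stronglyMeasurable
      simp only [Set.setOf_and]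
      exact (measurableSet_le (by fun_prop) (by fun_prop)).inter
        (measurableSet_le (by fun_prop) (by fun_prop))
    have hSM : ∀ k : ℕ, StronglyMeasurable fun s : ℝ => ∫ y : ℝ, gfun κ t x k (s, y) :=
      fun k => (hGmeas k).integral_prod_right'
    -- swap the sum and the outer integral
    have claim3 :
        (∫ s in Set.Ioc (0:ℝ) t, ∑' k : ℕ, A k * ∫ y : ℝ, gfun κ t x k (s, y))
          = ∑' k : ℕ, ∫ s in Set.Ioc (0:ℝ) t, A k * ∫ y : ℝ, gfun κ t x k (s, y) := by
      have hbd : ∀ k : ℕ, ∀ s ∈ Set.Ioc (0:ℝ) t,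
          ‖A k * ∫ y : ℝ, gfun κ t x k (s, y)‖
            ≤ A k * (((κ * t) ^ 2) ^ k * (2 * (κ * t))) := by
        intro k s hs
        rw [norm_mul, Real.norm_eq_abs, Real.norm_eq_abs, abs_of_nonneg (hAk k)]
        refine mul_le_mul_of_nonneg_left ?_ (hAk k)
        exact (norm_integral_le_integral_norm _).trans (key k s hs).2
      have hint : ∀ k : ℕ, Integrable
          (fun s => A k * ∫ y : ℝ, gfun κ t x k (s, y)) (volume.restrict (Set.Ioc 0 t)) := by
        intro k
        refine Integrable.mono'
          (integrableOn_const measure_Ioc_lt_top.ne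
            : Integrable (fun _ => A k * (((κ * t) ^ 2) ^ k * (2 * (κ * t)))) _)
          (((hSM k).aestronglyMeasurable).const_mul (A k)) ?_
        filter_upwards [ae_restrict_mem measurableSet_Ioc] with s hs
        exact hbd k s hs
      have hsum : Summable fun k : ℕ =>
          ∫ s in Set.Ioc (0:ℝ) t, ‖A k * ∫ y : ℝ, gfun κ t x k (s, y)‖ := by
        refine Summable.of_nonneg_of_le
          (fun k => integral_nonneg (fun s => norm_nonneg _)) (fun k => ?_)
          ((((summable_aux C hC).mul_left (lam ^ 4 / 16)).mul_right (2 * (κ * t))).mul_right t)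
        calc ∫ s in Set.Ioc (0:ℝ) t, ‖A k * ∫ y : ℝ, gfun κ t x k (s, y)‖
            ≤ ∫ _ in Set.Ioc (0:ℝ) t, A k * (((κ * t) ^ 2) ^ k * (2 * (κ * t))) :=
              setIntegral_mono_on (hint k).norm
                (integrableOn_const measure_Ioc_lt_top.ne)
                measurableSet_Ioc (hbd k)
          _ = A k * (((κ * t) ^ 2) ^ k * (2 * (κ * t))) * t := by
              rw [setIntegral_const, measureReal_def, Real.volume_Ioc, sub_zero, smul_eq_mul,
                ENNReal.toReal_ofReal ht.le]
              ring
          _ = lam ^ 4 / 16 * (C ^ k / (k.factorial : ℝ) ^ 2) * (2 * (κ * t)) * t := by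
              rw [hA, hCdef]
              rw [show lam ^ 2 * (κ * t) ^ 2 / (8 * κ) = lam ^ 2 / (8 * κ) * (κ * t) ^ 2 by ring,
                mul_pow (lam ^ 2 / (8 * κ)) ((κ * t) ^ 2) k]
              ring
      exact (integral_tsum_of_summable_integral_norm hint hsum).symm
    -- put the left-hand side together
    have lhs_eq :
        (∫ s in Set.Ioc (0:ℝ) t, ∫ y : ℝ,
            Kker κ lam (t - s) (x - y) * (lam ^ 2 * waveKernel κ s y ^ 2))
          = ∑' k : ℕ, A k *
              ((κ * t + x) ^ (k + 1) * (κ * t - x) ^ (k + 1) / (2 * κ * ((k : ℝ) + 1) ^ 2)) := by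
      rw [setIntegral_congr_fun measurableSet_Ioc
        (fun s hs => integral_congr_ae (Filter.Eventually.of_forall (claim1 s hs)))]
      rw [setIntegral_congr_fun measurableSet_Ioc (fun s hs => claim2 s hs)]
      rw [claim3]
      refine tsum_congr fun k => ?_
      rw [integral_const_mul, lemB κ t x hκ ht hξ hη k]
    rw [lhs_eq]
    -- compute the right-hand side
    have hv0 : 0 ≤ lam ^ 2 * ((κ * t) ^ 2 - x ^ 2) / (2 * κ) := by
      have : 0 ≤ (κ * t) ^ 2 - x ^ 2 := by nlinarith [sq_abs x, abs_nonneg x]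
      positivity
    unfold Kker waveKernel
    rw [if_pos hx, if_pos ⟨ht.le, hx⟩, besselI0, Real.sq_sqrt hv0]
    rw [Summable.tsum_eq_zero_add (summable_aux _ (by positivity))]
    simp only [pow_zero, Nat.factorial_zero, Nat.cast_one, one_pow, div_one]
    rw [show ∀ T : ℝ, lam ^ 2 / 4 * (1 + T) - lam ^ 2 * (1 / 2) ^ 2 = lam ^ 2 / 4 * T
        from fun T => by ring]
    rw [← tsum_mul_left]
    refine tsum_congr fun k => ?_
    have hk1 : ((k : ℝ) + 1) ≠ 0 := by positivity
    have hfact : ((k.factorial : ℝ)) ≠ 0 := Nat.cast_ne_zero.2 k.factorial_ne_zero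
    have hv4 : lam ^ 2 * ((κ * t) ^ 2 - x ^ 2) / (2 * κ) / 4
        = lam ^ 2 / (8 * κ) * ((κ * t + x) * (κ * t - x)) := by
      ring
    rw [hA, hv4, mul_pow (lam ^ 2 / (8 * κ)) ((κ * t + x) * (κ * t - x)) (k + 1),
      mul_pow (κ * t + x) (κ * t - x) (k + 1), Nat.factorial_succ]
    push_cast
    field_simp
    rw [pow_succ (lam ^ 2 / (8 * κ)) k]
    field_simp
    ring
  · -- degenerate case : |x| > κ t, everything vanishes
    have hK : Kker κ lam t x = 0 := if_neg (not_le.2 hx)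
    have hW : waveKernel κ t x = 0 := if_neg (fun hc => absurd hc.2 (not_le.2 hx))
    rw [hK, hW]
    rw [setIntegral_congr_fun measurableSet_Ioc (g := fun _ => (0:ℝ)) ?_]
    · simp
    · intro s hs
      have hz : ∀ y : ℝ, Kker κ lam (t - s) (x - y) * (lam ^ 2 * waveKernel κ s y ^ 2) = 0 := by
        intro y
        by_cases h1 : |x - y| ≤ κ * (t - s)
        · by_cases h2 : 0 ≤ s ∧ |y| ≤ κ * s
          · exfalso
            have habs := abs_add_le (x - y) y
            rw [sub_add_cancel] at habs
            have := h2.2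
            linarith [hx]
          · unfold waveKernel
            rw [if_neg h2]
            ring
        · unfold Kker
          rw [if_neg h1]
          ring
      simp only [hz, integral_zero]
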